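/- Let X = ω₁ × ω be the set of pairs (ξ, n) with ξ an ordinal < ω₁ and n ∈ ℕ, partially ordered componentwise: (ξ, n) ≤ (ζ, m) iff ξ ≤ ζ and n ≤ m. Then X admits no cofinal chain, i.e., there is no totally ordered subset C ⊆ X such that every element of X is ≤ some element of C. Consequently, the increasing chain of chains in IC(X, ≤) given by x^γ_n = (γ, n) for γ < ω₁ and n < ω has no upper bound in IC(X, ≤). -/

import Mathlib

universe u

/-- An increasing chain in a quasi-ordered set `(X, r)`: an ordinal `len` together with a
family of elements of `X` indexed by the ordinals below `len`, such that `β < γ` implies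
`x_β ≺ x_γ` (i.e. `x_β ≼ x_γ` and not `x_γ ≼ x_β`). -/
structure IncChain (X : Type u) (r : X → X → Prop) : Type (u + 1) where
  len : Ordinal.{u}
  val : (β : Ordinal.{u}) → β < len → X
  inc : ∀ (β γ : Ordinal.{u}) (hβ : β < len) (hγ : γ < len), β < γ →
    r (val β hβ) (val γ hγ) ∧ ¬ r (val γ hγ) (val β hβ)

namespace IncChain

variable {X : Type u} {r : X → X → Prop}

/-- The domination quasi-order `⊑` on increasing chains. -/
def Le (A B : IncChain X r) : Prop :=
  ∀ (β : Ordinal.{u}) (hβ : β < A.len), ∃ (γ : Ordinal.{u}) (hγ : γ < B.len),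
    r (A.val β hβ) (B.val γ hγ)

/-- The equivalence `≐` induced by `⊑`. -/
def Equiv (A B : IncChain X r) : Prop := A.Le B ∧ B.Le A

/-- `A ⊆ B`: every element of the chain `A` occurs in the chain `B`. -/
def Subset (A B : IncChain X r) : Prop :=
  ∀ (β : Ordinal.{u}) (hβ : β < A.len), ∃ (γ : Ordinal.{u}) (hγ : γ < B.len),
    B.val γ hγ = A.val β hβ

/-- `A` is cofinal in `B`. -/
def Cofinal (A B : IncChain X r) : Prop := A.Subset B ∧ B.Le A

/-- The cofinality of a chain: the least ordinal indexing a chain cofinal in it. -/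
noncomputable def cof (B : IncChain X r) : Ordinal.{u} :=
  sInf {α : Ordinal.{u} | ∃ A : IncChain X r, A.len = α ∧ A.Cofinal B}

/-- A maximal chain. -/
def Maximal (A : IncChain X r) : Prop := ∀ B : IncChain X r, A.Le B → B.Le A

end IncChain

/-- The set of ordinals below `ω₁`, the first uncountable ordinal. -/
def OmegaOneBelow : Type 1 := {o : Ordinal.{0} // o < (Cardinal.aleph 1).ord}

/-- `X = ω₁ × ω`. -/
def OmegaOneTimesOmega : Type 1 := OmegaOneBelow × ℕ

/-- The componentwise partial order on `ω₁ × ω`. -/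
def prodLe (a b : OmegaOneTimesOmega) : Prop := a.1.1 ≤ b.1.1 ∧ a.2 ≤ b.2

theorem stmt6_aux :
    ¬ ∃ C : Set OmegaOneTimesOmega,
        (∀ a ∈ C, ∀ b ∈ C, prodLe a b ∨ prodLe b a) ∧
        (∀ x : OmegaOneTimesOmega, ∃ c ∈ C, prodLe x c) := by
  rintro ⟨C, hchain, hcof⟩
  by_cases hb : ∀ n : ℕ, ∃ b : Ordinal.{0}, b < (Cardinal.aleph 1).ord ∧
      ∀ c ∈ C, c.2 ≤ n → c.1.1 ≤ b
  · choose b hb1 hb2 using hb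
    have hsup : (⨆ n, b n) < (Cardinal.aleph 1).ord := by
      apply Ordinal.iSup_lt_ord _ hb1
      rw [Cardinal.isRegular_aleph_one.cof_eq, Cardinal.mk_nat]
      exact Cardinal.aleph0_lt_aleph_one
    have hlim : Order.IsSuccLimit ((Cardinal.aleph 1).ord) :=
      Cardinal.isSuccLimit_ord Cardinal.aleph0_lt_aleph_one.le
    have hlt : (⨆ n, b n) + 1 < (Cardinal.aleph 1).ord := by
      rw [← Order.succ_eq_add_one]
      exact hlim.succ_lt hsup
    obtain ⟨c, hcC, hc⟩ := hcof (⟨(⨆ n, b n) + 1, hlt⟩, 0)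
    have h1 : c.1.1 ≤ b c.2 := hb2 c.2 c hcC le_rfl
    have h2 : b c.2 ≤ ⨆ n, b n := Ordinal.le_iSup b c.2
    have h3 : (⨆ n, b n) + 1 ≤ c.1.1 := hc.1
    have h4 : (⨆ n, b n) + 1 ≤ ⨆ n, b n := h3.trans (h1.trans h2)
    exact absurd h4 (by simp)
  · push_neg at hb
    obtain ⟨n, hn⟩ := hb
    obtain ⟨c, hcC, hc⟩ := hcof (⟨0, (Cardinal.isSuccLimit_ord Cardinal.aleph0_lt_aleph_one.le).pos⟩, n + 1)
    obtain ⟨d, hdC, hd2, hd1⟩ := hn c.1.1 c.1.2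
    have h5 : n + 1 ≤ c.2 := hc.2
    rcases hchain c hcC d hdC with h | h
    · have h6 : c.2 ≤ d.2 := h.2
      omega
    · exact absurd h.1 hd1.not_ge

/-- `ω₁ × ω`, ordered componentwise, admits no cofinal chain; consequently the
increasing chain of chains given by `x^γ_n = (γ, n)` has no upper bound in `IC(ω₁ × ω, ≤)`. -/
theorem stmt6 :
    -- no cofinal chain: no totally ordered subset `C` dominating every element
    (¬ ∃ C : Set OmegaOneTimesOmega,
        (∀ a ∈ C, ∀ b ∈ C, prodLe a b ∨ prodLe b a) ∧
        (∀ x : OmegaOneTimesOmega, ∃ c ∈ C, prodLe x c)) ∧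
    -- each family `(x^γ_n)_{n<ω} = ((γ, n))_{n<ω}` is an increasing chain
    (∀ (γ : OmegaOneBelow) (n m : ℕ), n < m →
      prodLe (γ, n) (γ, m) ∧ ¬ prodLe (γ, m) (γ, n)) ∧
    -- and these chains form an increasing chain of chains of length `ω₁`
    (∀ γ γ' : OmegaOneBelow, γ.1 < γ'.1 →
      (∀ n : ℕ, ∃ m : ℕ, prodLe (γ, n) (γ', m)) ∧
      ¬ (∀ n : ℕ, ∃ m : ℕ, prodLe (γ', n) (γ, m))) ∧
    -- which has no upper bound in `IC(ω₁ × ω, ≤)`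
    ¬ ∃ B : IncChain OmegaOneTimesOmega prodLe,
        ∀ (γ : OmegaOneBelow) (n : ℕ),
          ∃ (β : Ordinal.{1}) (hβ : β < B.len), prodLe (γ, n) (B.val β hβ) := by
  refine ⟨stmt6_aux, ?_⟩
  refine ⟨fun γ n m hnm => ⟨⟨le_rfl, hnm.le⟩, fun h => absurd h.2 (by omega)⟩, ?_, ?_⟩
  · intro γ γ' hγ
    refine ⟨fun n => ⟨n, hγ.le, le_rfl⟩, fun h => ?_⟩
    obtain ⟨m, hm⟩ := h 0
    exact absurd (hm.1.trans_lt hγ) (lt_irrefl _)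
  · rintro ⟨B, hB⟩
    refine stmt6_aux ⟨Set.range (fun p : {β : Ordinal.{1} // β < B.len} => B.val p.1 p.2), ?_, ?_⟩
    · rintro a ⟨⟨β, hβ⟩, rfl⟩ b ⟨⟨γ, hγ⟩, rfl⟩
      rcases lt_trichotomy β γ with h | h | h
      · exact Or.inl (B.inc β γ hβ hγ h).1
      · subst h; exact Or.inl ⟨le_rfl, le_rfl⟩
      · exact Or.inr (B.inc γ β hγ hβ h).1
    · rintro ⟨γ, n⟩
      obtain ⟨β, hβ, h⟩ := hB γ n
      exact ⟨B.val β hβ, ⟨⟨β, hβ⟩, rfl⟩, h⟩
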